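/- Let 𝒳 be a tree of metrizable spaces over a tree T with nonempty compact metrizable edge spaces and a compatible family of metrics 𝒟 (so each edge space embeds isometrically into its two adjacent vertex spaces). Define the quotient pseudometric d_∼ on the disjoint union of vertex spaces via infima over linking chains. Then for any two points x, y in distinct vertex spaces, the infimum d_∼(x,y) is attained by an efficient linking chain (one whose chain of vertex spaces follows the geodesic in T), and d_∼ descends to a genuine metric on the quotient space X_T = X_⊔/∼. -/

import Mathlib

section TreeOfSpaces

open scoped Classical

variable {T : Type*} (X : T → Type*) [∀ v, MetricSpace (X v)]

/-- The distance within a common vertex space between two points of the disjoint union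
`⊔_v X_v` (and `0` for points of different vertex spaces; linking chains only use pairs in a
common vertex space). -/
noncomputable def fiberDist (a b : Σ v, X v) : ℝ :=
  if h : a.1 = b.1 then dist (h ▸ a.2) b.2 else 0

/-- The length `d_⊔(α)` of a linking chain, given as a list of pairs `(p_i, q_i)`. -/
noncomputable def chainLength (c : List ((Σ v, X v) × (Σ v, X v))) : ℝ :=
  (c.map fun pr => fiberDist X pr.1 pr.2).sum

/-- `c` is a linking chain from `x` to `y`: a nonempty list of pairs `(p_i, q_i)`, each pair in
a common vertex space, starting at `x`, ending at `y`, with `q_i ∼ p_{i+1}` (where `R` is the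
gluing equivalence relation). -/
def IsLinkingChain (R : (Σ v, X v) → (Σ v, X v) → Prop)
    (c : List ((Σ v, X v) × (Σ v, X v))) (x y : Σ v, X v) : Prop :=
  ∃ hne : c ≠ [], (c.head hne).1 = x ∧ (c.getLast hne).2 = y ∧
    (∀ pr ∈ c, pr.1.1 = pr.2.1) ∧ c.Chain' (fun pr pr' => R pr.2 pr'.1)

/-- The quotient pseudometric `d_∼`: the infimum of lengths of linking chains. -/
noncomputable def quotDist (R : (Σ v, X v) → (Σ v, X v) → Prop) (x y : Σ v, X v) : ℝ :=
  sInf {L : ℝ | ∃ c, IsLinkingChain X R c x y ∧ chainLength X c = L}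

/-- A linking chain is efficient if its sequence of vertex spaces traces out the geodesic
(the unique embedded path) in the tree `G` between the vertex spaces of its endpoints. -/
def IsEfficientChain (G : SimpleGraph T)
    (c : List ((Σ v, X v) × (Σ v, X v))) (x y : Σ v, X v) : Prop :=
  ∃ w : G.Walk x.1 y.1, w.IsPath ∧ c.map (fun pr => pr.1.1) = w.support

end TreeOfSpaces

open SimpleGraph
set_option linter.unusedSectionVars false
set_option maxHeartbeats 1000000
section Aux
variable {T : Type*} {G : SimpleGraph T} {X : T → Type*} [∀ v, MetricSpace (X v)]
  {Espace : G.edgeSet → Type*} [∀ e, MetricSpace (Espace e)]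

noncomputable def walkCost (ψ : ∀ (e : G.edgeSet) (v : T), v ∈ (e : Sym2 T) → Espace e → X v) :
    ∀ {u v : T}, G.Walk u v → X u → X v → ℝ
  | _, _, SimpleGraph.Walk.nil, x, y => dist x y
  | _, _, @SimpleGraph.Walk.cons _ _ u m v h p, x, y =>
      ⨅ z : Espace ⟨s(u, m), h⟩,
        (dist x (ψ ⟨s(u, m), h⟩ u (Sym2.mem_mk_left u m) z) +
          walkCost ψ p (ψ ⟨s(u, m), h⟩ m (Sym2.mem_mk_right u m) z) y)

variable (ψ : ∀ (e : G.edgeSet) (v : T), v ∈ (e : Sym2 T) → Espace e → X v)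

theorem walkCost_nil {u : T} (x y : X u) : walkCost ψ (Walk.nil : G.Walk u u) x y = dist x y := rfl

theorem walkCost_cons {u m v : T} (h : G.Adj u m) (p : G.Walk m v) (x : X u) (y : X v) :
    walkCost ψ (Walk.cons h p) x y =
      ⨅ z : Espace ⟨s(u, m), h⟩,
        (dist x (ψ ⟨s(u, m), h⟩ u (Sym2.mem_mk_left u m) z) +
          walkCost ψ p (ψ ⟨s(u, m), h⟩ m (Sym2.mem_mk_right u m) z) y) := rfl

variable [∀ e, Nonempty (Espace e)]

theorem walkCost_nonneg : ∀ {u v : T} (w : G.Walk u v) (x : X u) (y : X v),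
    0 ≤ walkCost ψ w x y
  | _, _, SimpleGraph.Walk.nil, x, y => dist_nonneg
  | _, _, @SimpleGraph.Walk.cons _ _ u m v h p, x, y => by
      rw [walkCost_cons]
      exact le_ciInf fun z => add_nonneg dist_nonneg (walkCost_nonneg p _ y)

theorem walkCost_bddBelow {u m v : T} (h : G.Adj u m) (p : G.Walk m v) (x : X u) (y : X v) :
    BddBelow (Set.range fun z : Espace ⟨s(u, m), h⟩ =>
      (dist x (ψ ⟨s(u, m), h⟩ u (Sym2.mem_mk_left u m) z) +
        walkCost ψ p (ψ ⟨s(u, m), h⟩ m (Sym2.mem_mk_right u m) z) y)) :=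
  ⟨0, by rintro _ ⟨z, rfl⟩; exact add_nonneg dist_nonneg (walkCost_nonneg ψ p _ y)⟩

theorem walkCost_cons_le {u m v : T} (h : G.Adj u m) (p : G.Walk m v) (x : X u) (y : X v)
    (z : Espace ⟨s(u, m), h⟩) :
    walkCost ψ (Walk.cons h p) x y ≤
      dist x (ψ ⟨s(u, m), h⟩ u (Sym2.mem_mk_left u m) z) +
        walkCost ψ p (ψ ⟨s(u, m), h⟩ m (Sym2.mem_mk_right u m) z) y := by
  rw [walkCost_cons]; exact ciInf_le (walkCost_bddBelow ψ h p x y) z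

/-- 1-Lipschitz in the first argument. -/
theorem walkCost_le_dist_add : ∀ {u v : T} (w : G.Walk u v) (x x' : X u) (y : X v),
    walkCost ψ w x y ≤ dist x x' + walkCost ψ w x' y
  | _, _, SimpleGraph.Walk.nil, x, x', y => by
      rw [walkCost_nil, walkCost_nil]; exact dist_triangle x x' y
  | _, _, @SimpleGraph.Walk.cons _ _ u m v h p, x, x', y => by
      rw [walkCost_cons ψ h p x' y, ← sub_le_iff_le_add']
      refine le_ciInf fun z => sub_le_iff_le_add'.2 ?_
      calc walkCost ψ (Walk.cons h p) x y
          ≤ dist x (ψ _ u (Sym2.mem_mk_left u m) z) +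
              walkCost ψ p (ψ _ m (Sym2.mem_mk_right u m) z) y := walkCost_cons_le ψ h p x y z
        _ ≤ (dist x x' + dist x' (ψ _ u (Sym2.mem_mk_left u m) z)) +
              walkCost ψ p (ψ _ m (Sym2.mem_mk_right u m) z) y := by
            gcongr; exact dist_triangle _ _ _
        _ = dist x x' + (dist x' (ψ _ u (Sym2.mem_mk_left u m) z) +
              walkCost ψ p (ψ _ m (Sym2.mem_mk_right u m) z) y) := by ring

theorem psi_congr {e e' : G.edgeSet} (he : e = e') {v : T} (hv : v ∈ (e : Sym2 T))
    (z : Espace e) : ψ e v hv z = ψ e' v (he ▸ hv) (he ▸ z) := by subst he; rfl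

/-- Cost of a single-edge walk is at most the cost through any point of the edge space. -/
theorem walkCost_single_le (e : G.edgeSet) {u v : T} (hu : u ∈ (e : Sym2 T))
    (hv : v ∈ (e : Sym2 T)) (h : G.Adj u v) (z : Espace e) (a : X u) (b : X v) :
    walkCost ψ (Walk.cons h Walk.nil) a b ≤ dist a (ψ e u hu z) + dist (ψ e v hv z) b := by
  have he : e = ⟨s(u, v), h⟩ :=
    Subtype.ext ((Sym2.mem_and_mem_iff h.ne).1 ⟨hu, hv⟩)
  subst he
  exact walkCost_cons_le ψ h Walk.nil a b z

/-- Subadditivity along concatenation of walks. -/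
theorem walkCost_append_le : ∀ {u v w : T} (p : G.Walk u v) (q : G.Walk v w)
    (x : X u) (y : X v) (z : X w),
    walkCost ψ (p.append q) x z ≤ walkCost ψ p x y + walkCost ψ q y z
  | _, _, _, SimpleGraph.Walk.nil, q, x, y, z => by
      rw [Walk.nil_append, walkCost_nil]
      exact walkCost_le_dist_add ψ q x y z
  | _, _, _, @SimpleGraph.Walk.cons _ _ u m v h p, q, x, y, z => by
      rw [Walk.cons_append, walkCost_cons ψ h p x y]
      rw [show (⨅ z : Espace ⟨s(u, m), h⟩, (dist x (ψ ⟨s(u, m), h⟩ u (Sym2.mem_mk_left u m) z) + walkCost ψ p (ψ ⟨s(u, m), h⟩ m (Sym2.mem_mk_right u m) z) y)) + walkCost ψ q y z = walkCost ψ q y z + (⨅ z : Espace ⟨s(u, m), h⟩, (dist x (ψ ⟨s(u, m), h⟩ u (Sym2.mem_mk_left u m) z) + walkCost ψ p (ψ ⟨s(u, m), h⟩ m (Sym2.mem_mk_right u m) z) y)) from add_comm _ _, ← sub_le_iff_le_add']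
      refine le_ciInf fun z1 => ?_
      rw [sub_le_iff_le_add]
      calc walkCost ψ (Walk.cons h (p.append q)) x z
          ≤ dist x (ψ _ u (Sym2.mem_mk_left u m) z1) +
              walkCost ψ (p.append q) (ψ _ m (Sym2.mem_mk_right u m) z1) z :=
            walkCost_cons_le ψ h (p.append q) x z z1
        _ ≤ dist x (ψ _ u (Sym2.mem_mk_left u m) z1) +
              (walkCost ψ p (ψ _ m (Sym2.mem_mk_right u m) z1) y + walkCost ψ q y z) := by
            gcongr; exact walkCost_append_le p q _ y z
        _ = dist x (ψ _ u (Sym2.mem_mk_left u m) z1) +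
              walkCost ψ p (ψ _ m (Sym2.mem_mk_right u m) z1) y + walkCost ψ q y z := by ring
        _ = _ := by ring

theorem walkCost_reverse_le : ∀ {u v : T} (w : G.Walk u v) (x : X u) (y : X v),
    walkCost ψ w.reverse y x ≤ walkCost ψ w x y
  | _, _, SimpleGraph.Walk.nil, x, y => by
      rw [Walk.reverse_nil, walkCost_nil, walkCost_nil, _root_.dist_comm]
  | _, _, @SimpleGraph.Walk.cons _ _ u m v h p, x, y => by
      rw [walkCost_cons ψ h p x y]
      refine le_ciInf fun z => ?_
      rw [Walk.reverse_cons]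
      calc walkCost ψ (p.reverse.append (Walk.cons h.symm Walk.nil)) y x
          ≤ walkCost ψ p.reverse y (ψ _ m (Sym2.mem_mk_right u m) z) +
              walkCost ψ (Walk.cons h.symm Walk.nil)
                (ψ ⟨s(u, m), h⟩ m (Sym2.mem_mk_right u m) z) x :=
            walkCost_append_le ψ p.reverse _ y _ x
        _ ≤ walkCost ψ p (ψ _ m (Sym2.mem_mk_right u m) z) y +
              (dist (ψ ⟨s(u, m), h⟩ m (Sym2.mem_mk_right u m) z)
                  (ψ ⟨s(u, m), h⟩ m (Sym2.mem_mk_right u m) z) +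
                dist (ψ ⟨s(u, m), h⟩ u (Sym2.mem_mk_left u m) z) x) := by
            gcongr
            · exact walkCost_reverse_le p _ y
            · exact walkCost_single_le ψ ⟨s(u, m), h⟩ (Sym2.mem_mk_right u m)
                (Sym2.mem_mk_left u m) h.symm z _ x
        _ = dist x (ψ _ u (Sym2.mem_mk_left u m) z) +
              walkCost ψ p (ψ _ m (Sym2.mem_mk_right u m) z) y := by
            rw [_root_.dist_self, _root_.dist_comm]; ring

theorem walkCost_lipschitz {u v : T} (p : G.Walk u v) (y : X v) :
    LipschitzWith 1 (fun a : X u => walkCost ψ p a y) := by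
  refine LipschitzWith.of_dist_le_mul fun a b => ?_
  simp only [NNReal.coe_one, one_mul, Real.dist_eq, abs_sub_le_iff]
  constructor
  · have := walkCost_le_dist_add ψ p a b y; linarith
  · have := walkCost_le_dist_add ψ p b a y; rw [_root_.dist_comm] at this; linarith

/-- The unique path between two vertices of a tree. -/
noncomputable def treePath (hT : G.IsTree) (u v : T) : G.Walk u v :=
  (hT.existsUnique_path u v).choose

theorem treePath_isPath (hT : G.IsTree) (u v : T) : (treePath hT u v).IsPath :=
  (hT.existsUnique_path u v).choose_spec.1

theorem IsPath.eq_treePath (hT : G.IsTree) {u v : T} {p : G.Walk u v} (hp : p.IsPath) :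
    p = treePath hT u v :=
  (hT.existsUnique_path u v).choose_spec.2 p hp

theorem treePath_refl (hT : G.IsTree) (u : T) : treePath hT u u = Walk.nil :=
  (IsPath.eq_treePath hT (Walk.IsPath.nil)).symm

/-- The candidate distance on the disjoint union: cost along the tree geodesic. -/
noncomputable def sDist (hT : G.IsTree) (x y : Σ v, X v) : ℝ :=
  walkCost ψ (treePath hT x.1 y.1) x.2 y.2

theorem sDist_nonneg (hT : G.IsTree) (x y : Σ v, X v) : 0 ≤ sDist ψ hT x y :=
  walkCost_nonneg ψ _ _ _

theorem fiberDist_same {v : T} (p q : X v) :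
    fiberDist X (⟨v, p⟩ : Σ t, X t) ⟨v, q⟩ = dist p q := by
  simp [fiberDist]

theorem fiberDist_nonneg (a b : Σ v, X v) : 0 ≤ fiberDist X a b := by
  rw [fiberDist]; split <;> [exact dist_nonneg; exact le_refl 0]

theorem chainLength_nonneg (c : List ((Σ v, X v) × (Σ v, X v))) : 0 ≤ chainLength X c :=
  List.sum_nonneg (by
    intro a ha
    obtain ⟨pr, -, rfl⟩ := List.mem_map.1 ha
    exact fiberDist_nonneg pr.1 pr.2)

theorem chainLength_cons (pr : (Σ v, X v) × (Σ v, X v)) (c : List ((Σ v, X v) × (Σ v, X v))) :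
    chainLength X (pr :: c) = fiberDist X pr.1 pr.2 + chainLength X c := by
  simp [chainLength]

theorem sDist_fiber (hT : G.IsTree) {v : T} (p q : X v) :
    sDist ψ hT (⟨v, p⟩ : Σ t, X t) ⟨v, q⟩ = dist p q := by
  rw [sDist]
  dsimp only
  rw [treePath_refl hT, walkCost_nil]

theorem sDist_eq_fiberDist (hT : G.IsTree) {a b : Σ v, X v} (hab : a.1 = b.1) :
    sDist ψ hT a b = fiberDist X a b := by
  obtain ⟨v, p⟩ := a; obtain ⟨w, q⟩ := b
  dsimp at hab; subst hab
  rw [sDist_fiber, fiberDist_same]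

theorem sDist_symm (hT : G.IsTree) (x y : Σ v, X v) : sDist ψ hT x y = sDist ψ hT y x := by
  have key : ∀ a b : Σ v, X v, sDist ψ hT b a ≤ sDist ψ hT a b := by
    intro a b
    have h1 : treePath hT b.1 a.1 = (treePath hT a.1 b.1).reverse :=
      (IsPath.eq_treePath hT ((treePath_isPath hT a.1 b.1).reverse)).symm
    rw [sDist, h1]
    exact walkCost_reverse_le ψ _ _ _
  exact le_antisymm (key y x) (key x y)

theorem sDist_glue (hT : G.IsTree) (e : G.edgeSet) (v v' : T) (hv : v ∈ (e : Sym2 T))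
    (hv' : v' ∈ (e : Sym2 T)) (z : Espace e) :
    sDist ψ hT (⟨v, ψ e v hv z⟩ : Σ t, X t) ⟨v', ψ e v' hv' z⟩ = 0 := by
  by_cases hvv : v = v'
  · subst hvv
    rw [sDist_fiber]
    exact _root_.dist_self _
  · have he2 : (e : Sym2 T) = s(v, v') := (Sym2.mem_and_mem_iff hvv).1 ⟨hv, hv'⟩
    have hadj : G.Adj v v' := G.mem_edgeSet.1 (he2 ▸ e.2)
    have hpath : (Walk.cons hadj Walk.nil : G.Walk v v').IsPath := by
      simp [Walk.isPath_def, hvv]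
    refine le_antisymm ?_ (sDist_nonneg ψ hT _ _)
    rw [sDist]
    dsimp only
    rw [show treePath hT v v' = Walk.cons hadj Walk.nil from (IsPath.eq_treePath hT hpath).symm]
    calc walkCost ψ (Walk.cons hadj Walk.nil) (ψ e v hv z) (ψ e v' hv' z)
        ≤ dist (ψ e v hv z) (ψ e v hv z) + dist (ψ e v' hv' z) (ψ e v' hv' z) :=
          walkCost_single_le ψ e hv hv' hadj z _ _
      _ = 0 := by rw [_root_.dist_self, _root_.dist_self, add_zero]

variable (hψ : ∀ e v hv, Isometry (ψ e v hv))
include hψ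

/-- Key reduction lemma: the cost along any walk dominates the cost along the tree geodesic. -/
theorem walkCost_treePath_le (hT : G.IsTree) :
    ∀ {u v : T} (w : G.Walk u v) (x : X u) (y : X v),
    walkCost ψ (treePath hT u v) x y ≤ walkCost ψ w x y
  | _, _, SimpleGraph.Walk.nil, x, y => by
      rw [treePath_refl hT]
  | _, _, @SimpleGraph.Walk.cons _ _ u m v h p, x, y => by
      classical
      rw [walkCost_cons ψ h p x y]
      refine le_ciInf fun z => ?_
      have key : walkCost ψ (treePath hT u v) x y ≤
          dist x (ψ ⟨s(u, m), h⟩ u (Sym2.mem_mk_left u m) z) +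
            walkCost ψ (treePath hT m v) (ψ ⟨s(u, m), h⟩ m (Sym2.mem_mk_right u m) z) y := by
        by_cases hu : u ∈ (treePath hT m v).support
        · -- geodesic from m to v passes through u
          set t := treePath hT m v with ht
          have htake : t.takeUntil u hu = Walk.cons h.symm Walk.nil := by
            have h1 : (t.takeUntil u hu).IsPath := (treePath_isPath hT m v).takeUntil hu
            have h2 : (Walk.cons h.symm Walk.nil : G.Walk m u).IsPath := by
              simp [Walk.isPath_def, h.ne']
            rw [IsPath.eq_treePath hT h1, IsPath.eq_treePath hT h2]
          have hdrop : t.dropUntil u hu = treePath hT u v :=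
            IsPath.eq_treePath hT ((treePath_isPath hT m v).dropUntil hu)
          have hsplit : t = Walk.cons h.symm (treePath hT u v) := by
            conv_lhs => rw [← Walk.take_spec t hu]
            rw [htake, hdrop, Walk.cons_append, Walk.nil_append]
          rw [hsplit, walkCost_cons, ← sub_le_iff_le_add']
          refine le_ciInf fun z' => ?_
          rw [sub_le_iff_le_add']
          have he : (⟨s(u, m), h⟩ : G.edgeSet) = ⟨s(m, u), h.symm⟩ :=
            Subtype.ext (Sym2.eq_swap)
          have hiso : dist (ψ ⟨s(m, u), h.symm⟩ m (Sym2.mem_mk_left m u) (he ▸ z))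
                (ψ ⟨s(m, u), h.symm⟩ m (Sym2.mem_mk_left m u) z') =
              dist (ψ ⟨s(m, u), h.symm⟩ u (Sym2.mem_mk_right m u) (he ▸ z))
                (ψ ⟨s(m, u), h.symm⟩ u (Sym2.mem_mk_right m u) z') := by
            rw [(hψ _ m (Sym2.mem_mk_left m u)).dist_eq,
              (hψ _ u (Sym2.mem_mk_right m u)).dist_eq]
          have e1 : ψ ⟨s(u, m), h⟩ u (Sym2.mem_mk_left u m) z =
              ψ ⟨s(m, u), h.symm⟩ u (Sym2.mem_mk_right m u) (he ▸ z) :=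
            psi_congr ψ he _ z
          have e2 : ψ ⟨s(u, m), h⟩ m (Sym2.mem_mk_right u m) z =
              ψ ⟨s(m, u), h.symm⟩ m (Sym2.mem_mk_left m u) (he ▸ z) :=
            psi_congr ψ he _ z
          calc walkCost ψ (treePath hT u v) x y
              ≤ dist x (ψ ⟨s(m, u), h.symm⟩ u (Sym2.mem_mk_right m u) z') +
                  walkCost ψ (treePath hT u v)
                    (ψ ⟨s(m, u), h.symm⟩ u (Sym2.mem_mk_right m u) z') y :=
                walkCost_le_dist_add ψ _ x _ y
            _ ≤ (dist x (ψ ⟨s(u, m), h⟩ u (Sym2.mem_mk_left u m) z) +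
                  dist (ψ ⟨s(m, u), h.symm⟩ u (Sym2.mem_mk_right m u) (he ▸ z))
                    (ψ ⟨s(m, u), h.symm⟩ u (Sym2.mem_mk_right m u) z')) +
                  walkCost ψ (treePath hT u v)
                    (ψ ⟨s(m, u), h.symm⟩ u (Sym2.mem_mk_right m u) z') y := by
                gcongr
                rw [e1]
                exact dist_triangle _ _ _
            _ = dist x (ψ ⟨s(u, m), h⟩ u (Sym2.mem_mk_left u m) z) +
                  (dist (ψ ⟨s(u, m), h⟩ m (Sym2.mem_mk_right u m) z)
                    (ψ ⟨s(m, u), h.symm⟩ m (Sym2.mem_mk_left m u) z') +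
                  walkCost ψ (treePath hT u v)
                    (ψ ⟨s(m, u), h.symm⟩ u (Sym2.mem_mk_right m u) z') y) := by
                rw [e2, hiso]; ring
        · -- u is not on the geodesic from m to v: prepend the edge
          have hpath : (Walk.cons h (treePath hT m v)).IsPath :=
            (treePath_isPath hT m v).cons hu
          rw [show treePath hT u v = Walk.cons h (treePath hT m v) from
            (IsPath.eq_treePath hT hpath).symm]
          exact walkCost_cons_le ψ h (treePath hT m v) x y z
      refine key.trans ?_
      gcongr
      exact walkCost_treePath_le hT p _ y

theorem sDist_triangle (hT : G.IsTree) (x y z : Σ v, X v) :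
    sDist ψ hT x z ≤ sDist ψ hT x y + sDist ψ hT y z := by
  calc sDist ψ hT x z
      ≤ walkCost ψ ((treePath hT x.1 y.1).append (treePath hT y.1 z.1)) x.2 z.2 :=
        walkCost_treePath_le ψ hψ hT _ x.2 z.2
    _ ≤ walkCost ψ (treePath hT x.1 y.1) x.2 y.2 +
          walkCost ψ (treePath hT y.1 z.1) y.2 z.2 :=
        walkCost_append_le ψ _ _ x.2 y.2 z.2
    _ = sDist ψ hT x y + sDist ψ hT y z := rfl

theorem sDist_of_eqvGen {R : (Σ v, X v) → (Σ v, X v) → Prop} (hT : G.IsTree)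
    (hrel : ∀ a b, R a b → sDist ψ hT a b = 0) {x y : Σ v, X v}
    (h : Relation.EqvGen R x y) : sDist ψ hT x y = 0 := by
  induction h with
  | rel a b hab => exact hrel a b hab
  | refl a =>
      obtain ⟨v, p⟩ := a
      rw [sDist_fiber]
      exact _root_.dist_self p
  | symm a b _ ih => rw [sDist_symm]; exact ih
  | trans a b c _ _ ih1 ih2 =>
      refine le_antisymm ?_ (sDist_nonneg ψ hT _ _)
      calc sDist ψ hT a c ≤ sDist ψ hT a b + sDist ψ hT b c := sDist_triangle ψ hψ hT a b c
        _ = 0 := by rw [ih1, ih2, add_zero]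

theorem sDist_le_chainLength {R : (Σ v, X v) → (Σ v, X v) → Prop} (hT : G.IsTree)
    (hrel : ∀ a b, R a b → sDist ψ hT a b = 0) :
    ∀ (c : List ((Σ v, X v) × (Σ v, X v))) (x y : Σ v, X v),
      IsLinkingChain X R c x y → sDist ψ hT x y ≤ chainLength X c
  | [], x, y, hc => absurd rfl hc.1
  | [pr], x, y, hc => by
      obtain ⟨hne, hhead, hlast, hfib, -⟩ := hc
      simp only [List.head_cons] at hhead
      simp only [List.getLast_singleton] at hlast
      subst hhead; subst hlast
      rw [chainLength_cons, chainLength, List.map_nil, List.sum_nil, add_zero,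
        sDist_eq_fiberDist ψ hT (hfib pr (List.mem_singleton_self pr))]
  | pr :: pr' :: rest, x, y, hc => by
      obtain ⟨hne, hhead, hlast, hfib, hchain⟩ := hc
      simp only [List.head_cons] at hhead
      subst hhead
      rw [List.getLast_cons (List.cons_ne_nil pr' rest)] at hlast
      unfold List.Chain' at hchain; rw [List.isChain_cons_cons] at hchain
      have hc' : IsLinkingChain X R (pr' :: rest) pr'.1 y :=
        ⟨List.cons_ne_nil pr' rest, rfl, hlast,
          fun q hq => hfib q (List.mem_cons_of_mem pr hq), hchain.2⟩
      have ih := sDist_le_chainLength hT hrel (pr' :: rest) pr'.1 y hc'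
      calc sDist ψ hT pr.1 y
          ≤ sDist ψ hT pr.1 pr.2 + sDist ψ hT pr.2 y := sDist_triangle ψ hψ hT _ _ _
        _ ≤ sDist ψ hT pr.1 pr.2 + (sDist ψ hT pr.2 pr'.1 + sDist ψ hT pr'.1 y) := by
            gcongr; exact sDist_triangle ψ hψ hT _ _ _
        _ = fiberDist X pr.1 pr.2 + sDist ψ hT pr'.1 y := by
            rw [sDist_eq_fiberDist ψ hT (hfib pr (List.mem_cons_self (a := pr) (l := _))),
              hrel _ _ hchain.1, zero_add]
        _ ≤ fiberDist X pr.1 pr.2 + chainLength X (pr' :: rest) := by gcongr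
        _ = chainLength X (pr :: pr' :: rest) := (chainLength_cons _ _).symm

variable [∀ e, CompactSpace (Espace e)]
include hψ

/-- The infimum in `walkCost` over a (compact, nonempty) edge space is attained. -/
theorem walkCost_cons_attained {u m v : T} (h : G.Adj u m) (p : G.Walk m v)
    (x : X u) (y : X v) : ∃ z : Espace ⟨s(u, m), h⟩,
    walkCost ψ (Walk.cons h p) x y =
      dist x (ψ ⟨s(u, m), h⟩ u (Sym2.mem_mk_left u m) z) +
        walkCost ψ p (ψ ⟨s(u, m), h⟩ m (Sym2.mem_mk_right u m) z) y := by
  set f : Espace ⟨s(u, m), h⟩ → ℝ := fun z =>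
    dist x (ψ ⟨s(u, m), h⟩ u (Sym2.mem_mk_left u m) z) +
      walkCost ψ p (ψ ⟨s(u, m), h⟩ m (Sym2.mem_mk_right u m) z) y with hf
  have hcont : Continuous f := by
    apply Continuous.add
    · exact continuous_const.dist (hψ _ u (Sym2.mem_mk_left u m)).continuous
    · exact ((walkCost_lipschitz ψ p y).continuous).comp
        (hψ _ m (Sym2.mem_mk_right u m)).continuous
  obtain ⟨z0, -, hz0⟩ := isCompact_univ.exists_isMinOn Set.univ_nonempty
    hcont.continuousOn
  refine ⟨z0, le_antisymm (walkCost_cons_le ψ h p x y z0) ?_⟩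
  rw [walkCost_cons]
  exact le_ciInf fun z => hz0 (Set.mem_univ z)

theorem walkCost_eq_zero : ∀ {u v : T} (w : G.Walk u v) (x : X u) (y : X v)
    (hr' : ∀ (e : G.edgeSet) (a b : T) (ha : a ∈ (e : Sym2 T)) (hb : b ∈ (e : Sym2 T))
      (z : Espace e), R (⟨a, ψ e a ha z⟩ : Σ t, X t) ⟨b, ψ e b hb z⟩),
    walkCost ψ w x y = 0 → Relation.EqvGen R ⟨u, x⟩ ⟨v, y⟩
  | _, _, SimpleGraph.Walk.nil, x, y, hr', h0 => by
      rw [walkCost_nil] at h0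
      rw [dist_eq_zero] at h0
      subst h0
      exact Relation.EqvGen.refl _
  | _, _, @SimpleGraph.Walk.cons _ _ u m v h p, x, y, hr', h0 => by
      obtain ⟨z, hz⟩ := walkCost_cons_attained ψ hψ h p x y
      rw [h0] at hz
      have h1 : dist x (ψ ⟨s(u, m), h⟩ u (Sym2.mem_mk_left u m) z) = 0 ∧
          walkCost ψ p (ψ ⟨s(u, m), h⟩ m (Sym2.mem_mk_right u m) z) y = 0 := by
        constructor <;> nlinarith [dist_nonneg (x := x)
          (y := ψ ⟨s(u, m), h⟩ u (Sym2.mem_mk_left u m) z),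
          walkCost_nonneg ψ p (ψ ⟨s(u, m), h⟩ m (Sym2.mem_mk_right u m) z) y]
      obtain ⟨h1, h2⟩ := h1
      rw [dist_eq_zero] at h1
      subst h1
      exact Relation.EqvGen.trans _ _ _
        (Relation.EqvGen.rel _ _ (hr' ⟨s(u, m), h⟩ u m _ _ z))
        (walkCost_eq_zero p _ y hr' h2)

/-- Along any walk there is a linking chain realizing `walkCost`, whose vertex trace is the
support of the walk. -/
theorem exists_chain {R : (Σ v, X v) → (Σ v, X v) → Prop}
    (hrel2 : ∀ (e : G.edgeSet) (a b : T) (ha : a ∈ (e : Sym2 T)) (hb : b ∈ (e : Sym2 T))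
      (z : Espace e), R (⟨a, ψ e a ha z⟩ : Σ t, X t) ⟨b, ψ e b hb z⟩) :
    ∀ {u v : T} (w : G.Walk u v) (x : X u) (y : X v),
    ∃ c, IsLinkingChain X R c ⟨u, x⟩ ⟨v, y⟩ ∧
      c.map (fun pr => pr.1.1) = w.support ∧ chainLength X c = walkCost ψ w x y
  | _, _, SimpleGraph.Walk.nil, x, y => by
      refine ⟨[(⟨_, x⟩, ⟨_, y⟩)], ⟨List.cons_ne_nil _ _, rfl, rfl, ?_, List.isChain_singleton _⟩,
        by simp, ?_⟩
      · rintro pr hpr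
        rw [List.mem_singleton] at hpr
        subst hpr; rfl
      · rw [chainLength_cons, walkCost_nil, fiberDist_same, chainLength, List.map_nil,
          List.sum_nil, add_zero]
  | _, _, @SimpleGraph.Walk.cons _ _ u m v h p, x, y => by
      obtain ⟨z0, hz0⟩ := walkCost_cons_attained ψ hψ h p x y
      obtain ⟨c', ⟨hne', hhead', hlast', hfib', hchain'⟩, hmap', hlen'⟩ :=
        exists_chain hrel2 p (ψ ⟨s(u, m), h⟩ m (Sym2.mem_mk_right u m) z0) y
      refine ⟨(⟨u, x⟩, ⟨u, ψ ⟨s(u, m), h⟩ u (Sym2.mem_mk_left u m) z0⟩) :: c',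
        ⟨List.cons_ne_nil _ _, rfl, ?_, ?_, ?_⟩, ?_, ?_⟩
      · rw [List.getLast_cons hne']; exact hlast'
      · rintro pr hpr
        rcases List.mem_cons.1 hpr with hpr | hpr
        · subst hpr; rfl
        · exact hfib' pr hpr
      · unfold List.Chain'; rw [List.isChain_cons]
        refine ⟨?_, hchain'⟩
        intro q hq
        rw [List.head?_eq_head hne', Option.mem_some_iff] at hq
        subst hq
        rw [hhead']
        exact hrel2 ⟨s(u, m), h⟩ u m (Sym2.mem_mk_left u m) (Sym2.mem_mk_right u m) z0
      · rw [List.map_cons, hmap', Walk.support_cons]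
      · rw [chainLength_cons, hlen', fiberDist_same, hz0]

/-- The quotient pseudometric coincides with the geodesic cost. -/
theorem quotDist_eq_sDist {R : (Σ v, X v) → (Σ v, X v) → Prop} (hT : G.IsTree)
    (hrel : ∀ a b, R a b → sDist ψ hT a b = 0)
    (hrel2 : ∀ (e : G.edgeSet) (a b : T) (ha : a ∈ (e : Sym2 T)) (hb : b ∈ (e : Sym2 T))
      (z : Espace e), R (⟨a, ψ e a ha z⟩ : Σ t, X t) ⟨b, ψ e b hb z⟩)
    (x y : Σ v, X v) : quotDist X R x y = sDist ψ hT x y := by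
  obtain ⟨c, hc, -, hlen⟩ := exists_chain ψ hψ hrel2 (treePath hT x.1 y.1) x.2 y.2
  rw [Sigma.eta, Sigma.eta] at hc
  have hmem : sDist ψ hT x y ∈
      {L : ℝ | ∃ c, IsLinkingChain X R c x y ∧ chainLength X c = L} := ⟨c, hc, hlen⟩
  refine le_antisymm (csInf_le ⟨0, ?_⟩ hmem) (le_csInf ⟨_, hmem⟩ ?_)
  · rintro L ⟨c', -, rfl⟩
    exact chainLength_nonneg c'
  · rintro L ⟨c', hc', rfl⟩
    exact sDist_le_chainLength ψ hψ hT hrel c' x y hc'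
end Aux

/-- Let `𝒳` be a tree of metrizable spaces over a tree `G` with nonempty compact
metrizable edge spaces and a compatible family of metrics (each edge space `Espace e` embeds
isometrically via `ψ` into its adjacent vertex spaces).  Let `r` be the gluing relation
generated by identifying the two images of each edge-space point, and `d_∼ = quotDist` the
quotient pseudometric defined via linking chains.  Then for points `x, y` in distinct vertex
spaces the infimum is attained by an efficient linking chain, and `d_∼` vanishes exactly on
the gluing equivalence relation, i.e. it descends to a genuine metric on `X_T = X_⊔/∼`. -/

theorem stmt12 {T : Type*} (G : SimpleGraph T) (hT : G.IsTree)
    (X : T → Type*) [∀ v, MetricSpace (X v)] [∀ v, Nonempty (X v)]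
    (Espace : G.edgeSet → Type*) [∀ e, MetricSpace (Espace e)]
    [∀ e, CompactSpace (Espace e)] [∀ e, Nonempty (Espace e)]
    (ψ : ∀ (e : G.edgeSet) (v : T), v ∈ (e : Sym2 T) → Espace e → X v)
    (hψ : ∀ e v hv, Isometry (ψ e v hv))
    (r : (Σ v, X v) → (Σ v, X v) → Prop)
    (hr : ∀ a b, r a b ↔ ∃ (e : G.edgeSet) (v v' : T) (hv : v ∈ (e : Sym2 T))
      (hv' : v' ∈ (e : Sym2 T)) (z : Espace e),
        a = ⟨v, ψ e v hv z⟩ ∧ b = ⟨v', ψ e v' hv' z⟩) :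
    (∀ x y : Σ v, X v, x.1 ≠ y.1 →
      ∃ c, IsLinkingChain X (Relation.EqvGen r) c x y ∧ IsEfficientChain X G c x y ∧
        chainLength X c = quotDist X (Relation.EqvGen r) x y) ∧
    (∀ x y : Σ v, X v, quotDist X (Relation.EqvGen r) x y = 0 ↔ Relation.EqvGen r x y) := by
  classical
  have hrel2 : ∀ (e : G.edgeSet) (a b : T) (ha : a ∈ (e : Sym2 T)) (hb : b ∈ (e : Sym2 T))
      (z : Espace e), Relation.EqvGen r (⟨a, ψ e a ha z⟩ : Σ t, X t) ⟨b, ψ e b hb z⟩ :=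
    fun e a b ha hb z => Relation.EqvGen.rel _ _ ((hr _ _).2 ⟨e, a, b, ha, hb, z, rfl, rfl⟩)
  have hrel' : ∀ a b, r a b → sDist ψ hT a b = 0 := by
    intro a b hab
    obtain ⟨e, v, v', hv, hv', z, rfl, rfl⟩ := (hr a b).1 hab
    exact sDist_glue ψ hT e v v' hv hv' z
  have hrel : ∀ a b, Relation.EqvGen r a b → sDist ψ hT a b = 0 :=
    fun a b hab => sDist_of_eqvGen ψ hψ hT hrel' hab
  have hq : ∀ x y : Σ v, X v, quotDist X (Relation.EqvGen r) x y = sDist ψ hT x y :=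
    fun x y => quotDist_eq_sDist ψ hψ hT hrel hrel2 x y
  constructor
  · intro x y _
    obtain ⟨c, hc, hmap, hlen⟩ := exists_chain ψ hψ hrel2 (treePath hT x.1 y.1) x.2 y.2
    rw [Sigma.eta, Sigma.eta] at hc
    refine ⟨c, hc, ⟨treePath hT x.1 y.1, treePath_isPath hT x.1 y.1, hmap⟩, ?_⟩
    rw [hlen, hq x y]
    rfl
  · intro x y
    rw [hq x y]
    constructor
    · intro h0
      have := walkCost_eq_zero ψ hψ (treePath hT x.1 y.1) x.2 y.2
        (fun e a b ha hb z => (hr _ _).2 ⟨e, a, b, ha, hb, z, rfl, rfl⟩) h0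
      rwa [Sigma.eta, Sigma.eta] at this
    · intro h
      exact hrel x y h
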